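/- arXiv:0912.0798 — 2 statements merged into one kernel-verified Lean document; each statement's English description precedes it below -/
import Mathlib

section
/- Every permutation appearing in the product σ * τ (for σ ∈ S_k, τ ∈ S_l) is a permutation π of S_{k+l} such that the standardization of the first k entries of π is σ and the standardization of the last l entries is τ; conversely, every such π appears exactly once in σ * τ. -/
open Equiv

/-- `σ` is the standardization of the tuple `u`: it preserves relative order. -/
def IsStd {k : ℕ} {α : Type*} [LinearOrder α] (u : Fin k → α) (σ : Equiv.Perm (Fin k)) : Prop :=
  ∀ i j, σ i < σ j ↔ u i < u j

/-- The permutation `σ|_A . τ|_B` (concatenation), where `B = Aᶜ`: the first `k` values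
are the elements of `A` arranged in the relative order prescribed by `σ`, and the last
`l` values are the elements of `Aᶜ` arranged in the relative order prescribed by `τ`. -/
def concatPerm {k l : ℕ} (σ : Equiv.Perm (Fin k)) (τ : Equiv.Perm (Fin l))
    (A : Finset (Fin (k + l))) (hA : A.card = k) : Equiv.Perm (Fin (k + l)) :=
  finSumFinEquiv.symm.trans
    ((Equiv.sumCongr (σ.trans (A.orderIsoOfFin hA).toEquiv)
        (τ.trans ((Aᶜ).orderIsoOfFin
          (by rw [Finset.card_compl, hA, Fintype.card_fin]; omega)).toEquiv)).trans
      ((Equiv.sumCongr (Equiv.refl _)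
          (Equiv.subtypeEquivRight (fun x => Finset.mem_compl))).trans
        (Equiv.sumCompl (· ∈ A))))

/-- The Malvenuto–Reutenauer product `σ * τ`, as the multiset of its summands:
`σ * τ = Σ_{A ⊔ B = {1,…,k+l}, |A| = k} σ|_A . τ|_B`. -/
def mrProd {k l : ℕ} (σ : Equiv.Perm (Fin k)) (τ : Equiv.Perm (Fin l)) :
    Multiset (Equiv.Perm (Fin (k + l))) :=
  (Finset.univ.filter (fun A : Finset (Fin (k + l)) => A.card = k)).attach.val.map
    (fun A => concatPerm σ τ A.1 (by have h := A.2; simp only [Finset.mem_filter] at h; exact h.2))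

lemma card_compl_eq {k l : ℕ} {A : Finset (Fin (k + l))} (hA : A.card = k) :
    (Aᶜ).card = l := by rw [Finset.card_compl, hA, Fintype.card_fin]; omega

lemma concatPerm_castAdd {k l : ℕ} (σ : Equiv.Perm (Fin k)) (τ : Equiv.Perm (Fin l))
    (A : Finset (Fin (k + l))) (hA : A.card = k) (i : Fin k) :
    concatPerm σ τ A hA (Fin.castAdd l i) = (A.orderIsoOfFin hA (σ i) : Fin (k+l)) := by
  simp [concatPerm]

lemma concatPerm_natAdd {k l : ℕ} (σ : Equiv.Perm (Fin k)) (τ : Equiv.Perm (Fin l))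
    (A : Finset (Fin (k + l))) (hA : A.card = k) (j : Fin l) :
    concatPerm σ τ A hA (Fin.natAdd k j)
      = ((Aᶜ).orderIsoOfFin (card_compl_eq hA) (τ j) : Fin (k+l)) := by
  simp [concatPerm]

lemma image_concatPerm {k l : ℕ} (σ : Equiv.Perm (Fin k)) (τ : Equiv.Perm (Fin l))
    (A : Finset (Fin (k + l))) (hA : A.card = k) :
    Finset.image (fun i : Fin k => concatPerm σ τ A hA (Fin.castAdd l i)) Finset.univ = A := by
  apply Finset.eq_of_subset_of_card_le
  · intro x hx
    rcases Finset.mem_image.1 hx with ⟨i, -, rfl⟩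
    rw [concatPerm_castAdd]
    exact (A.orderIsoOfFin hA (σ i)).2
  · rw [hA, Finset.card_image_of_injective _
      (fun a b h => Fin.castAdd_injective k l ((concatPerm σ τ A hA).injective h)),
      Finset.card_univ, Fintype.card_fin]

lemma isStd_of_concat {k l : ℕ} (σ : Equiv.Perm (Fin k)) (τ : Equiv.Perm (Fin l))
    (A : Finset (Fin (k + l))) (hA : A.card = k) :
    IsStd (fun i : Fin k => concatPerm σ τ A hA (Fin.castAdd l i)) σ ∧
    IsStd (fun j : Fin l => concatPerm σ τ A hA (Fin.natAdd k j)) τ := by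
  constructor
  · intro i j
    simp only []
    rw [concatPerm_castAdd, concatPerm_castAdd, Subtype.coe_lt_coe, OrderIso.lt_iff_lt]
  · intro i j
    simp only []
    rw [concatPerm_natAdd, concatPerm_natAdd, Subtype.coe_lt_coe, OrderIso.lt_iff_lt]

lemma concat_of_isStd {k l : ℕ} (σ : Equiv.Perm (Fin k)) (τ : Equiv.Perm (Fin l))
    (π : Equiv.Perm (Fin (k + l)))
    (h1 : IsStd (fun i : Fin k => π (Fin.castAdd l i)) σ)
    (h2 : IsStd (fun j : Fin l => π (Fin.natAdd k j)) τ) :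
    ∃ (A : Finset (Fin (k + l))) (hA : A.card = k), π = concatPerm σ τ A hA := by
  set A : Finset (Fin (k + l)) :=
    Finset.image (fun i : Fin k => π (Fin.castAdd l i)) Finset.univ with hAdef
  have hA : A.card = k := by
    rw [hAdef, Finset.card_image_of_injective _
      (fun a b h => Fin.castAdd_injective k l (π.injective h)),
      Finset.card_univ, Fintype.card_fin]
  refine ⟨A, hA, ?_⟩
  have hg : (fun a : Fin k => π (Fin.castAdd l (σ.symm a))) = A.orderEmbOfFin hA := by
    apply Finset.orderEmbOfFin_unique
    · intro a
      exact Finset.mem_image.2 ⟨σ.symm a, Finset.mem_univ _, rfl⟩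
    · intro a b hab
      have := (h1 (σ.symm a) (σ.symm b)).mp
      simp only [Equiv.apply_symm_apply] at this
      exact this hab
  have hcast : ∀ i : Fin k, π (Fin.castAdd l i) = A.orderEmbOfFin hA (σ i) := by
    intro i
    have := congrFun hg (σ i)
    simpa using this
  have hmemc : ∀ j : Fin l, π (Fin.natAdd k j) ∈ Aᶜ := by
    intro j
    rw [Finset.mem_compl]
    intro hmem
    rcases Finset.mem_image.1 hmem with ⟨i, -, hi⟩
    have := π.injective hi
    have h1 : (Fin.castAdd l i : Fin (k+l)).val = i.val := rfl
    have h2 : (Fin.natAdd k j : Fin (k+l)).val = k + j.val := rfl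
    rw [Fin.ext_iff, h1, h2] at this
    omega
  have hh : (fun b : Fin l => π (Fin.natAdd k (τ.symm b)))
      = (Aᶜ).orderEmbOfFin (card_compl_eq hA) := by
    apply Finset.orderEmbOfFin_unique
    · intro b; exact hmemc _
    · intro a b hab
      have := (h2 (τ.symm a) (τ.symm b)).mp
      simp only [Equiv.apply_symm_apply] at this
      exact this hab
  have hnat : ∀ j : Fin l, π (Fin.natAdd k j) = (Aᶜ).orderEmbOfFin (card_compl_eq hA) (τ j) := by
    intro j
    have := congrFun hh (τ j)
    simpa using this
  ext x
  refine Fin.addCases (fun i => ?_) (fun j => ?_) x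
  · rw [concatPerm_castAdd, Finset.coe_orderIsoOfFin_apply, hcast]
  · rw [concatPerm_natAdd, Finset.coe_orderIsoOfFin_apply, hnat]

/-- A permutation `π ∈ S_{k+l}` appears in `σ * τ` iff the standardization of its first
`k` entries is `σ` and the standardization of its last `l` entries is `τ`; moreover every
such `π` appears exactly once. -/
theorem mem_mrProd_iff {k l : ℕ} (σ : Equiv.Perm (Fin k)) (τ : Equiv.Perm (Fin l))
    (π : Equiv.Perm (Fin (k + l))) :
    (π ∈ mrProd σ τ ↔
      IsStd (fun i : Fin k => π (Fin.castAdd l i)) σ ∧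
      IsStd (fun j : Fin l => π (Fin.natAdd k j)) τ) ∧
    (π ∈ mrProd σ τ → (mrProd σ τ).count π = 1) := by
  constructor
  · constructor
    · intro hmem
      rcases Multiset.mem_map.1 hmem with ⟨⟨A, hAmem⟩, -, rfl⟩
      exact isStd_of_concat σ τ A _
    · rintro ⟨h1, h2⟩
      rcases concat_of_isStd σ τ π h1 h2 with ⟨A, hA, rfl⟩
      refine Multiset.mem_map.2 ⟨⟨A, ?_⟩, ?_, rfl⟩
      · simp [hA]
      · exact Finset.mem_def.1 (Finset.mem_attach _ _)
  · intro hmem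
    apply Multiset.count_eq_one_of_mem _ hmem
    apply Multiset.Nodup.map_on _ (Finset.attach _).nodup
    rintro ⟨A, hAmem⟩ - ⟨B, hBmem⟩ - h
    have hA : A.card = k := by simpa using (Finset.mem_filter.1 hAmem).2
    have hB : B.card = k := by simpa using (Finset.mem_filter.1 hBmem).2
    have h' : concatPerm σ τ A hA = concatPerm σ τ B hB := h
    have : A = B := by
      rw [← image_concatPerm σ τ A hA, ← image_concatPerm σ τ B hB, h']
    subst this
    rfl
end

section
/- There is an explicit bijection between Catalan alternative tableaux of size n−1 and planar binary trees with n internal vertices. -/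
/-- A Catalan alternative tableau of size `n`.

The shape is a path of `n` steps from the vertical axis to the horizontal axis;
`shape s = true` means the `s`-th step is vertical (down, read as `+1`) and
`shape s = false` means it is horizontal (right, read as `-1`).  The cells of the
tableau are the pairs `(c, r)` where `c` is a horizontal step, `r` is a vertical step
and `c` occurs before `r` on the path (`c` indexes the column, `r` the row of the cell;
smaller `c` means further left, smaller `r` means higher up).

`dots c r = some true` means a red dot in cell `(c, r)`, `some false` a blue dot,
`none` no dot.  The axioms say: dots lie only in cells; no dot lies (strictly) below a
red dot; no dot lies (strictly) to the left of a blue dot; and every cell is below a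
red dot or to the left of a blue dot (a dotted cell covering itself). -/
structure CatAltTableau (n : ℕ) where
  shape : Fin n → Bool
  dots : Fin n → Fin n → Option Bool
  dots_mem_cells : ∀ c r, dots c r ≠ none → shape c = false ∧ shape r = true ∧ c < r
  no_dot_below_red : ∀ c r r', dots c r = some true → r < r' → dots c r' = none
  no_dot_left_of_blue : ∀ c r c', dots c r = some false → c' < c → dots c' r = none
  cover : ∀ c r, shape c = false → shape r = true → c < r →
    (∃ r₀, r₀ ≤ r ∧ dots c r₀ = some true) ∨ (∃ c₀, c ≤ c₀ ∧ dots c₀ r = some false)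


/-- ℕ-indexed model of Catalan alternative tableaux. -/
structure NatTab (n : ℕ) : Type where
  shape : ℕ → Bool
  dots : ℕ → ℕ → Option Bool
  shape_top : ∀ s, n ≤ s → shape s = true
  dots_cells : ∀ c r, dots c r ≠ none → shape c = false ∧ shape r = true ∧ c < r ∧ r < n
  red : ∀ c r r', dots c r = some true → r < r' → dots c r' = none
  blue : ∀ c r c', dots c r = some false → c' < c → dots c' r = none
  cover : ∀ c r, shape c = false → shape r = true → c < r → r < n →
    (∃ r₀, r₀ ≤ r ∧ dots c r₀ = some true) ∨ (∃ c₀, c ≤ c₀ ∧ dots c₀ r = some false)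

theorem NatTab.ext' {n} {t u : NatTab n} (h1 : t.shape = u.shape) (h2 : t.dots = u.dots) :
    t = u := by
  cases t; cases u; cases h1; cases h2; rfl

theorem CatAltTableau.ext' {n} {t u : CatAltTableau n} (h1 : t.shape = u.shape)
    (h2 : t.dots = u.dots) : t = u := by
  cases t; cases u; cases h1; cases h2; rfl

noncomputable def catEquivNat (n : ℕ) : CatAltTableau n ≃ NatTab n where
  toFun t :=
    { shape := fun s => if h : s < n then t.shape ⟨s, h⟩ else true
      dots := fun c r => if h : c < n ∧ r < n then t.dots ⟨c, h.1⟩ ⟨r, h.2⟩ else none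
      shape_top := fun s hs => by simp [Nat.not_lt.2 hs]
      dots_cells := by
        intro c r hd
        by_cases h : c < n ∧ r < n
        · simp only [dif_pos h] at hd ⊢
          obtain ⟨h1, h2, h3⟩ := t.dots_mem_cells _ _ hd
          exact ⟨by simp [h.1, h1], by simp [h.2, h2], h3, h.2⟩
        · simp [dif_neg h] at hd
      red := by
        intro c r r' hd hlt
        by_cases h : c < n ∧ r < n
        · simp only [dif_pos h] at hd
          by_cases h' : c < n ∧ r' < n
          · simp only [dif_pos h']
            exact t.no_dot_below_red _ _ _ hd hlt
          · simp [dif_neg h']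
        · simp [dif_neg h] at hd
      blue := by
        intro c r c' hd hlt
        by_cases h : c < n ∧ r < n
        · simp only [dif_pos h] at hd
          by_cases h' : c' < n ∧ r < n
          · simp only [dif_pos h']
            exact t.no_dot_left_of_blue _ _ _ hd hlt
          · simp [dif_neg h']
        · simp [dif_neg h] at hd
      cover := by
        intro c r hc hr hlt hrn
        have hcn : c < n := lt_trans hlt hrn
        simp only [dif_pos hcn, dif_pos hrn] at hc hr
        rcases t.cover ⟨c, hcn⟩ ⟨r, hrn⟩ hc hr hlt with ⟨r₀, hr₀, hd⟩ | ⟨c₀, hc₀, hd⟩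
        · exact Or.inl ⟨r₀, hr₀, by simp [r₀.isLt, hcn, hd]⟩
        · exact Or.inr ⟨c₀, hc₀, by simp [c₀.isLt, hrn, hd]⟩ }
  invFun t :=
    { shape := fun s => t.shape s
      dots := fun c r => t.dots c r
      dots_mem_cells := by
        intro c r hd
        obtain ⟨h1, h2, h3, _⟩ := t.dots_cells _ _ hd
        exact ⟨h1, h2, h3⟩
      no_dot_below_red := fun c r r' hd hlt => t.red _ _ _ hd hlt
      no_dot_left_of_blue := fun c r c' hd hlt => t.blue _ _ _ hd hlt
      cover := by
        intro c r hc hr hlt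
        rcases t.cover c r hc hr hlt r.isLt with ⟨r₀, hr₀, hd⟩ | ⟨c₀, hc₀, hd⟩
        · have hr₀n : r₀ < n := lt_of_le_of_lt hr₀ r.isLt
          exact Or.inl ⟨⟨r₀, hr₀n⟩, hr₀, hd⟩
        · have hc₀n : c₀ < n := (t.dots_cells _ _ (by simp [hd])).2.2.1.trans r.isLt
          exact Or.inr ⟨⟨c₀, hc₀n⟩, hc₀, hd⟩ }
  left_inv t := by
    apply CatAltTableau.ext'
    · funext s; simp [s.isLt]
    · funext c r; simp [c.isLt, r.isLt]
  right_inv t := by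
    apply NatTab.ext'
    · funext s
      by_cases h : s < n
      · simp [h]
      · simp [h, t.shape_top s (Nat.not_lt.1 h)]
    · funext c r
      by_cases h : c < n ∧ r < n
      · simp [h]
      · simp only [dif_neg h]
        by_contra hd
        have := (t.dots_cells c r (fun hh => hd hh.symm)).2.2.2
        have hc := (t.dots_cells c r (fun hh => hd hh.symm)).2.2.1
        exact h ⟨hc.trans this, this⟩

instance (n : ℕ) : Finite (CatAltTableau n) := by
  apply Finite.of_injective
    (fun t : CatAltTableau n => (t.shape, t.dots))
  intro t u h
  exact CatAltTableau.ext' (congrArg Prod.fst h) (congrArg Prod.snd h)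

instance (n : ℕ) : Finite (NatTab n) := Finite.of_equiv _ (catEquivNat n)

theorem natTab_zero_card : Nat.card (NatTab 0) = 1 := by
  rw [Nat.card_eq_one_iff_unique]
  constructor
  · constructor
    intro t u
    apply NatTab.ext'
    · funext s; rw [t.shape_top s (Nat.zero_le s), u.shape_top s (Nat.zero_le s)]
    · funext c r
      have h1 : t.dots c r = none := by
        by_contra hd; exact absurd (t.dots_cells c r hd).2.2.2 (by omega)
      have h2 : u.dots c r = none := by
        by_contra hd; exact absurd (u.dots_cells c r hd).2.2.2 (by omega)
      rw [h1, h2]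
  · exact ⟨⟨fun _ => true, fun _ _ => none, fun _ _ => rfl,
      fun c r hd => absurd rfl hd, fun _ _ _ h _ => by simp at h,
      fun _ _ _ h _ => by simp at h, fun c r hc => by simp at hc⟩⟩
/-- Remove the first step of a tableau (valid whatever the first step is,
provided no dot lies in column 0 — dots in column 0 are simply forgotten). -/
def NatTab.tail {n : ℕ} (t : NatTab (n + 1)) : NatTab n where
  shape s := t.shape (s + 1)
  dots c r := t.dots (c + 1) (r + 1)
  shape_top s hs := t.shape_top _ (by omega)
  dots_cells c r hd := by
    obtain ⟨h1, h2, h3, h4⟩ := t.dots_cells _ _ hd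
    exact ⟨h1, h2, by omega, by omega⟩
  red c r r' hd hlt := t.red _ _ _ hd (by omega)
  blue c r c' hd hlt := t.blue _ _ _ hd (by omega)
  cover c r hc hr hlt hrn := by
    rcases t.cover (c + 1) (r + 1) hc hr (by omega) (by omega) with
      ⟨r₀, hr₀, hd⟩ | ⟨c₀, hc₀, hd⟩
    · have h1 : c + 1 < r₀ := (t.dots_cells _ _ (by simp [hd])).2.2.1
      refine Or.inl ⟨r₀ - 1, by omega, ?_⟩
      show t.dots (c + 1) (r₀ - 1 + 1) = some true
      have : r₀ - 1 + 1 = r₀ := by omega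
      rw [this]; exact hd
    · have h1 : c₀ < r + 1 := (t.dots_cells _ _ (by simp [hd])).2.2.1
      refine Or.inr ⟨c₀ - 1, by omega, ?_⟩
      show t.dots (c₀ - 1 + 1) (r + 1) = some false
      have : c₀ - 1 + 1 = c₀ := by omega
      rw [this]; exact hd

/-- Case A: first step vertical. -/
noncomputable def equivA (n : ℕ) :
    {t : NatTab (n + 1) // t.shape 0 = true} ≃ NatTab n where
  toFun t := t.1.tail
  invFun u :=
    ⟨{ shape := fun s => if s = 0 then true else u.shape (s - 1)
       dots := fun c r => if c = 0 ∨ r = 0 then none else u.dots (c - 1) (r - 1)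
       shape_top := fun s hs => by
         by_cases h : s = 0
         · simp [h]
         · simp only [if_neg h]; exact u.shape_top _ (by omega)
       dots_cells := by
         intro c r hd
         by_cases h : c = 0 ∨ r = 0
         · simp [h] at hd
         · push_neg at h
           simp only [if_neg (by simp [h.1, h.2] : ¬(c = 0 ∨ r = 0))] at hd
           obtain ⟨h1, h2, h3, h4⟩ := u.dots_cells _ _ hd
           exact ⟨by simp [h.1, h1], by simp [h.2, h2], by omega, by omega⟩
       red := by
         intro c r r' hd hlt
         by_cases h : c = 0 ∨ r = 0
         · simp [h] at hd
         · push_neg at h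
           simp only [if_neg (by simp [h.1, h.2] : ¬(c = 0 ∨ r = 0))] at hd
           by_cases h' : r' = 0
           · omega
           · simp only [if_neg (by simp [h.1, h'] : ¬(c = 0 ∨ r' = 0))]
             exact u.red _ _ _ hd (by omega)
       blue := by
         intro c r c' hd hlt
         by_cases h : c = 0 ∨ r = 0
         · simp [h] at hd
         · push_neg at h
           simp only [if_neg (by simp [h.1, h.2] : ¬(c = 0 ∨ r = 0))] at hd
           by_cases h' : c' = 0
           · simp [h']
           · simp only [if_neg (by simp [h', h.2] : ¬(c' = 0 ∨ r = 0))]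
             exact u.blue _ _ _ hd (by omega)
       cover := by
         intro c r hc hr hlt hrn
         have hc0 : ¬ c = 0 := by intro h; rw [h] at hc; simp at hc
         have hr0 : ¬ r = 0 := by omega
         simp only [if_neg hc0] at hc
         simp only [if_neg hr0] at hr
         rcases u.cover (c - 1) (r - 1) hc hr (by omega) (by omega) with
           ⟨r₀, hr₀, hd⟩ | ⟨c₀, hc₀, hd⟩
         · refine Or.inl ⟨r₀ + 1, by omega, ?_⟩
           simp only [if_neg (by omega : ¬(c = 0 ∨ r₀ + 1 = 0))]
           simpa using hd
         · refine Or.inr ⟨c₀ + 1, by omega, ?_⟩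
           simp only [if_neg (by omega : ¬(c₀ + 1 = 0 ∨ r = 0))]
           simpa using hd },
     by simp⟩
  left_inv t := by
    obtain ⟨t, ht⟩ := t
    apply Subtype.ext
    apply NatTab.ext'
    · funext s
      by_cases h : s = 0
      · simp [h, ht]
      · simp only [NatTab.tail, if_neg h]
        congr 1; omega
    · funext c r
      by_cases h : c = 0 ∨ r = 0
      · simp only [if_pos h]
        rcases h with h | h
        · subst h
          by_contra hd
          have := (t.dots_cells 0 r (fun hh => hd hh.symm)).1
          rw [ht] at this; simp at this
        · subst h
          by_contra hd
          have := (t.dots_cells c 0 (fun hh => hd hh.symm)).2.2.1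
          omega
      · push_neg at h
        simp only [if_neg (by simp [h.1, h.2] : ¬(c = 0 ∨ r = 0)), NatTab.tail]
        congr 1 <;> omega
  right_inv u := by
    apply NatTab.ext'
    · funext s; simp [NatTab.tail]
    · funext c r; simp [NatTab.tail]

open Classical in
/-- Case B: first step horizontal, no red dot in column 0. -/
noncomputable def equivB (n : ℕ) :
    {t : NatTab (n + 1) // t.shape 0 = false ∧ ∀ r, t.dots 0 r ≠ some true} ≃ NatTab n where
  toFun t := t.1.tail
  invFun u :=
    ⟨{ shape := fun s => if s = 0 then false else u.shape (s - 1)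
       dots := fun c r =>
         if c = 0 then
           (if r ≠ 0 ∧ r - 1 < n ∧ u.shape (r - 1) = true ∧
               (∀ c₀, u.dots c₀ (r - 1) ≠ some false) then some false else none)
         else if r = 0 then none else u.dots (c - 1) (r - 1)
       shape_top := fun s hs => by
         simp only [if_neg (by omega : ¬ s = 0)]; exact u.shape_top _ (by omega)
       dots_cells := by
         intro c r hd
         by_cases hc : c = 0
         · subst hc
           simp only [if_pos rfl] at hd
           by_cases hcond : r ≠ 0 ∧ r - 1 < n ∧ u.shape (r - 1) = true ∧
               (∀ c₀, u.dots c₀ (r - 1) ≠ some false)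
           · obtain ⟨h1, h2, h3, _⟩ := hcond
             refine ⟨by simp, ?_, by omega, by omega⟩
             show (if r = 0 then false else u.shape (r - 1)) = true
             rw [if_neg h1]; exact h3
           · rw [if_neg hcond] at hd
             simp at hd
         · simp only [if_neg hc] at hd
           by_cases hr : r = 0
           · simp [hr] at hd
           · simp only [if_neg hr] at hd
             obtain ⟨h1, h2, h3, h4⟩ := u.dots_cells _ _ hd
             exact ⟨by simp [hc, h1], by simp [hr, h2], by omega, by omega⟩
       red := by
         intro c r r' hd hlt
         by_cases hc : c = 0
         · subst hc
           simp only [if_pos rfl] at hd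
           by_cases hcond : r ≠ 0 ∧ r - 1 < n ∧ u.shape (r - 1) = true ∧
               (∀ c₀, u.dots c₀ (r - 1) ≠ some false)
           · rw [if_pos hcond] at hd; simp at hd
           · rw [if_neg hcond] at hd; simp at hd
         · simp only [if_neg hc] at hd ⊢
           by_cases hr : r = 0
           · simp [hr] at hd
           · simp only [if_neg hr] at hd
             simp only [if_neg (by omega : ¬ r' = 0)]
             exact u.red _ _ _ hd (by omega)
       blue := by
         intro c r c' hd hlt
         by_cases hc : c = 0
         · omega
         · simp only [if_neg hc] at hd
           by_cases hr : r = 0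
           · simp [hr] at hd
           · simp only [if_neg hr] at hd
             by_cases hc' : c' = 0
             · subst hc'
               simp only [if_pos rfl]
               by_cases hcond : r ≠ 0 ∧ r - 1 < n ∧ u.shape (r - 1) = true ∧
                   (∀ c₀, u.dots c₀ (r - 1) ≠ some false)
               · exact absurd hd (hcond.2.2.2 (c - 1))
               · rw [if_neg hcond]; simp
             · simp only [if_neg hc', if_neg hr]
               exact u.blue _ _ _ hd (by omega)
       cover := by
         intro c r hc hr hlt hrn
         have hr0 : ¬ r = 0 := by omega
         simp only [if_neg hr0] at hr
         by_cases hc0 : c = 0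
         · subst hc0
           by_cases hb : ∀ c₀, u.dots c₀ (r - 1) ≠ some false
           · refine Or.inr ⟨0, le_refl 0, ?_⟩
             simp only [if_pos rfl, if_pos (⟨hr0, by omega, hr, hb⟩ :
               r ≠ 0 ∧ r - 1 < n ∧ u.shape (r - 1) = true ∧
                 (∀ c₀, u.dots c₀ (r - 1) ≠ some false))]
             simp
           · push_neg at hb
             obtain ⟨c₀, hb⟩ := hb
             refine Or.inr ⟨c₀ + 1, by omega, ?_⟩
             simp only [if_neg (by omega : ¬ c₀ + 1 = 0), if_neg hr0]
             simpa using hb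
         · simp only [if_neg hc0] at hc
           rcases u.cover (c - 1) (r - 1) hc hr (by omega) (by omega) with
             ⟨r₀, hr₀, hd⟩ | ⟨c₀, hc₀, hd⟩
           · refine Or.inl ⟨r₀ + 1, by omega, ?_⟩
             simp only [if_neg hc0, if_neg (by omega : ¬ r₀ + 1 = 0)]
             simpa using hd
           · refine Or.inr ⟨c₀ + 1, by omega, ?_⟩
             simp only [if_neg (by omega : ¬ c₀ + 1 = 0), if_neg hr0]
             simpa using hd },
     by
       constructor
       · simp
       · intro r
         simp only [if_pos rfl]
         by_cases hcond : r ≠ 0 ∧ r - 1 < n ∧ u.shape (r - 1) = true ∧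
             (∀ c₀, u.dots c₀ (r - 1) ≠ some false)
         · rw [if_pos hcond]; simp
         · rw [if_neg hcond]; simp⟩
  left_inv t := by
    obtain ⟨t, ht, hnored⟩ := t
    apply Subtype.ext
    apply NatTab.ext'
    · funext s
      by_cases h : s = 0
      · simp [h, ht]
      · simp only [NatTab.tail, if_neg h]
        congr 1; omega
    · funext c r
      by_cases hc : c = 0
      · subst hc
        simp only [if_pos rfl]
        -- column 0 dots of t are determined
        by_cases hcond : r ≠ 0 ∧ r - 1 < n ∧ t.tail.shape (r - 1) = true ∧
            (∀ c₀, t.tail.dots c₀ (r - 1) ≠ some false)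
        · rw [if_pos hcond]
          obtain ⟨h0, h1, h2, h3⟩ := hcond
          have hsr : t.shape r = true := by
            simpa [NatTab.tail, Nat.sub_add_cancel (by omega : 1 ≤ r)] using h2
          rcases t.cover 0 r ht hsr (by omega) (by omega) with
            ⟨r₀, _, hd⟩ | ⟨c₀, _, hd⟩
          · exact absurd hd (hnored r₀)
          · by_cases hc₀ : c₀ = 0
            · rw [hc₀] at hd; exact hd.symm
            · exfalso
              apply h3 (c₀ - 1)
              simp only [NatTab.tail]
              have e1 : c₀ - 1 + 1 = c₀ := by omega
              have e2 : r - 1 + 1 = r := by omega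
              rw [e1, e2]; exact hd
        · rw [if_neg hcond]
          by_contra hd
          have hd' : t.dots 0 r ≠ none := fun hh => hd hh.symm
          obtain ⟨_, hsr, hlt, hrn⟩ := t.dots_cells _ _ hd'
          have : t.dots 0 r = some false := by
            rcases Option.ne_none_iff_exists'.1 hd' with ⟨b, hb⟩
            cases b
            · exact hb
            · exact absurd hb (hnored r)
          apply hcond
          refine ⟨by omega, by omega, ?_, ?_⟩
          · simp only [NatTab.tail]
            have e2 : r - 1 + 1 = r := by omega
            rw [e2]; exact hsr
          · intro c₀ hbc
            simp only [NatTab.tail] at hbc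
            have e2 : r - 1 + 1 = r := by omega
            rw [e2] at hbc
            have hnone := t.blue _ _ 0 hbc (by omega)
            rw [hnone] at this
            cases this
      · simp only [if_neg hc]
        by_cases hr : r = 0
        · subst hr
          rw [if_pos rfl]
          by_contra hd
          have := (t.dots_cells c 0 (fun hh => hd hh.symm)).2.2.1
          omega
        · simp only [if_neg hr, NatTab.tail]
          congr 1 <;> omega
  right_inv u := by
    apply NatTab.ext'
    · funext s; simp [NatTab.tail]
    · funext c r; simp [NatTab.tail]
open Classical in
/-- Gluing: first step horizontal, a left tableau of size `j`, a vertical step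
(carrying the red dot of column 0 in row `j+1`), and a right tableau of size `k`. -/
noncomputable def glue {j k : ℕ} (L : NatTab j) (R : NatTab k) : NatTab (j + k + 2) where
  shape s := if s = 0 then false else if s ≤ j + 1 then L.shape (s - 1) else R.shape (s - (j + 2))
  dots c r :=
    if r = j + 1 then
      if c = 0 then some true
      else if c ≤ j ∧ L.shape (c - 1) = false ∧ (∀ r₀, L.dots (c - 1) r₀ ≠ some true) then
        some true
      else none
    else if c = 0 then
      if 1 ≤ r ∧ r ≤ j ∧ L.shape (r - 1) = true ∧ (∀ c₀, L.dots c₀ (r - 1) ≠ some false) then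
        some false
      else none
    else if c ≤ j + 1 ∧ r ≤ j + 1 then L.dots (c - 1) (r - 1)
    else if j + 2 ≤ c ∧ j + 2 ≤ r then R.dots (c - (j + 2)) (r - (j + 2))
    else none
  shape_top s hs := by
    beta_reduce
    rw [if_neg (by omega : ¬ s = 0), if_neg (by omega : ¬ s ≤ j + 1)]
    exact R.shape_top _ (by omega)
  dots_cells := by
    intro c r hd
    beta_reduce at hd ⊢
    have hshape1 : (if (j+1) = 0 then false
        else if (j+1) ≤ j + 1 then L.shape ((j+1) - 1) else R.shape ((j+1) - (j + 2))) = true := by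
      rw [if_neg (by omega : ¬ (j+1) = 0), if_pos (le_refl (j+1))]
      exact L.shape_top _ (by omega)
    by_cases hr1 : r = j + 1
    · subst hr1
      rw [if_pos rfl] at hd
      by_cases hc0 : c = 0
      · subst hc0
        refine ⟨by rw [if_pos rfl], hshape1, by omega, by omega⟩
      · rw [if_neg hc0] at hd
        by_cases hcond : c ≤ j ∧ L.shape (c - 1) = false ∧ (∀ r₀, L.dots (c - 1) r₀ ≠ some true)
        · refine ⟨?_, hshape1, by omega, by omega⟩
          rw [if_neg hc0, if_pos (by omega : c ≤ j + 1)]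
          exact hcond.2.1
        · rw [if_neg hcond] at hd; simp at hd
    · rw [if_neg hr1] at hd
      by_cases hc0 : c = 0
      · subst hc0
        rw [if_pos rfl] at hd
        by_cases hcond : 1 ≤ r ∧ r ≤ j ∧ L.shape (r - 1) = true ∧
            (∀ c₀, L.dots c₀ (r - 1) ≠ some false)
        · refine ⟨by rw [if_pos rfl], ?_, by omega, by omega⟩
          rw [if_neg (by omega : ¬ r = 0), if_pos (by omega : r ≤ j + 1)]
          exact hcond.2.2.1
        · rw [if_neg hcond] at hd; simp at hd
      · rw [if_neg hc0] at hd
        by_cases h3 : c ≤ j + 1 ∧ r ≤ j + 1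
        · rw [if_pos h3] at hd
          obtain ⟨e1, e2, e3, e4⟩ := L.dots_cells _ _ hd
          refine ⟨?_, ?_, by omega, by omega⟩
          · rw [if_neg hc0, if_pos h3.1]; exact e1
          · rw [if_neg (by omega : ¬ r = 0), if_pos h3.2]
            have : r - 1 + 1 = r := by omega
            exact e2
        · rw [if_neg h3] at hd
          by_cases h4 : j + 2 ≤ c ∧ j + 2 ≤ r
          · rw [if_pos h4] at hd
            obtain ⟨e1, e2, e3, e4⟩ := R.dots_cells _ _ hd
            refine ⟨?_, ?_, by omega, by omega⟩
            · rw [if_neg hc0, if_neg (by omega : ¬ c ≤ j + 1)]; exact e1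
            · rw [if_neg (by omega : ¬ r = 0), if_neg (by omega : ¬ r ≤ j + 1)]; exact e2
          · rw [if_neg h4] at hd; simp at hd
  red := by
    intro c r r' hd hlt
    beta_reduce at hd ⊢
    by_cases hr1 : r = j + 1
    · subst hr1
      rw [if_pos rfl] at hd
      rw [if_neg (by omega : ¬ r' = j + 1)]
      by_cases hc0 : c = 0
      · subst hc0
        rw [if_pos rfl, if_neg (by omega : ¬ (1 ≤ r' ∧ r' ≤ j ∧ L.shape (r' - 1) = true ∧
          (∀ c₀, L.dots c₀ (r' - 1) ≠ some false)))]
      · rw [if_neg hc0] at hd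
        by_cases hcond : c ≤ j ∧ L.shape (c - 1) = false ∧ (∀ r₀, L.dots (c - 1) r₀ ≠ some true)
        · rw [if_neg hc0, if_neg (by omega : ¬ (c ≤ j + 1 ∧ r' ≤ j + 1)),
            if_neg (by omega : ¬ (j + 2 ≤ c ∧ j + 2 ≤ r'))]
        · rw [if_neg hcond] at hd; simp at hd
    · rw [if_neg hr1] at hd
      by_cases hc0 : c = 0
      · subst hc0
        rw [if_pos rfl] at hd
        by_cases hcond : 1 ≤ r ∧ r ≤ j ∧ L.shape (r - 1) = true ∧
            (∀ c₀, L.dots c₀ (r - 1) ≠ some false)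
        · rw [if_pos hcond] at hd; simp at hd
        · rw [if_neg hcond] at hd; simp at hd
      · rw [if_neg hc0] at hd
        by_cases h3 : c ≤ j + 1 ∧ r ≤ j + 1
        · rw [if_pos h3] at hd
          obtain ⟨e1, e2, e3, e4⟩ := L.dots_cells _ _ (by rw [hd]; simp)
          by_cases hr'1 : r' = j + 1
          · subst hr'1
            rw [if_pos rfl, if_neg hc0,
              if_neg (by
                intro hcond
                exact hcond.2.2 (r - 1) hd)]
          · rw [if_neg hr'1, if_neg hc0]
            by_cases h3' : c ≤ j + 1 ∧ r' ≤ j + 1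
            · rw [if_pos h3']
              exact L.red _ _ _ hd (by omega)
            · rw [if_neg h3', if_neg (by omega : ¬ (j + 2 ≤ c ∧ j + 2 ≤ r'))]
        · rw [if_neg h3] at hd
          by_cases h4 : j + 2 ≤ c ∧ j + 2 ≤ r
          · rw [if_pos h4] at hd
            rw [if_neg (by omega : ¬ r' = j + 1), if_neg hc0,
              if_neg (by omega : ¬ (c ≤ j + 1 ∧ r' ≤ j + 1)),
              if_pos (⟨h4.1, by omega⟩ : j + 2 ≤ c ∧ j + 2 ≤ r')]
            have : r - (j + 2) < r' - (j + 2) := by omega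
            exact R.red _ _ _ hd this
          · rw [if_neg h4] at hd; simp at hd
  blue := by
    intro c r c' hd hlt
    beta_reduce at hd ⊢
    by_cases hr1 : r = j + 1
    · subst hr1
      rw [if_pos rfl] at hd
      by_cases hc0 : c = 0
      · rw [if_pos hc0] at hd; simp at hd
      · rw [if_neg hc0] at hd
        by_cases hcond : c ≤ j ∧ L.shape (c - 1) = false ∧ (∀ r₀, L.dots (c - 1) r₀ ≠ some true)
        · rw [if_pos hcond] at hd; simp at hd
        · rw [if_neg hcond] at hd; simp at hd
    · rw [if_neg hr1] at hd
      by_cases hc0 : c = 0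
      · omega
      · rw [if_neg hc0] at hd
        by_cases h3 : c ≤ j + 1 ∧ r ≤ j + 1
        · rw [if_pos h3] at hd
          obtain ⟨e1, e2, e3, e4⟩ := L.dots_cells _ _ (by rw [hd]; simp)
          rw [if_neg hr1]
          by_cases hc'0 : c' = 0
          · rw [if_pos hc'0,
              if_neg (by
                intro hcond
                exact hcond.2.2.2 (c - 1) hd)]
          · rw [if_neg hc'0, if_pos (⟨by omega, h3.2⟩ : c' ≤ j + 1 ∧ r ≤ j + 1)]
            exact L.blue _ _ _ hd (by omega)
        · rw [if_neg h3] at hd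
          by_cases h4 : j + 2 ≤ c ∧ j + 2 ≤ r
          · rw [if_pos h4] at hd
            rw [if_neg hr1]
            by_cases hc'0 : c' = 0
            · rw [if_pos hc'0, if_neg (by omega : ¬ (1 ≤ r ∧ r ≤ j ∧ L.shape (r - 1) = true ∧
                (∀ c₀, L.dots c₀ (r - 1) ≠ some false)))]
            · rw [if_neg hc'0]
              by_cases h5 : j + 2 ≤ c'
              · rw [if_neg (by omega : ¬ (c' ≤ j + 1 ∧ r ≤ j + 1)),
                  if_pos (⟨h5, h4.2⟩ : j + 2 ≤ c' ∧ j + 2 ≤ r)]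
                exact R.blue _ _ _ hd (by omega)
              · rw [if_neg (by omega : ¬ (c' ≤ j + 1 ∧ r ≤ j + 1)),
                  if_neg (by omega : ¬ (j + 2 ≤ c' ∧ j + 2 ≤ r))]
          · rw [if_neg h4] at hd; simp at hd
  cover := by
    intro c r hc hr hlt hrn
    beta_reduce at hc hr ⊢
    -- analyze the column class of c
    by_cases hc0 : c = 0
    · subst hc0
      by_cases hr1 : r = j + 1
      · subst hr1
        exact Or.inl ⟨j + 1, le_refl _, by rw [if_pos rfl, if_pos rfl]⟩
      · by_cases hrj : r ≤ j
        · -- r in the left block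
          rw [if_neg (by omega : ¬ r = 0), if_pos (by omega : r ≤ j + 1)] at hr
          by_cases hb : ∀ c₀, L.dots c₀ (r - 1) ≠ some false
          · refine Or.inr ⟨0, le_refl _, ?_⟩
            rw [if_neg hr1, if_pos rfl, if_pos (⟨by omega, hrj, hr, hb⟩ :
              1 ≤ r ∧ r ≤ j ∧ L.shape (r - 1) = true ∧ (∀ c₀, L.dots c₀ (r - 1) ≠ some false))]
          · push_neg at hb
            obtain ⟨c₀, hb⟩ := hb
            have hcell := L.dots_cells _ _ (by rw [hb]; simp)
            refine Or.inr ⟨c₀ + 1, by omega, ?_⟩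
            rw [if_neg hr1, if_neg (by omega : ¬ c₀ + 1 = 0),
              if_pos (⟨by omega, by omega⟩ : c₀ + 1 ≤ j + 1 ∧ r ≤ j + 1)]
            have e1 : c₀ + 1 - 1 = c₀ := by omega
            rw [e1]
            exact hb
        · -- r below the red of column 0
          exact Or.inl ⟨j + 1, by omega, by rw [if_pos rfl, if_pos rfl]⟩
    · by_cases hcj : c ≤ j + 1
      · -- c in the left block (c = j + 1 impossible)
        rw [if_neg hc0, if_pos hcj] at hc
        have hcj' : c ≤ j := by
          by_contra hh
          have : c - 1 = j := by omega
          rw [this, L.shape_top j (le_refl j)] at hc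
          simp at hc
        by_cases hrj : r ≤ j
        · -- cell inside the left block
          rw [if_neg (by omega : ¬ r = 0), if_pos (by omega : r ≤ j + 1)] at hr
          rcases L.cover (c - 1) (r - 1) hc hr (by omega) (by omega) with
            ⟨r₀, hr₀, hd⟩ | ⟨c₀, hc₀, hd⟩
          · have hcell := L.dots_cells _ _ (by rw [hd]; simp)
            refine Or.inl ⟨r₀ + 1, by omega, ?_⟩
            rw [if_neg (by omega : ¬ r₀ + 1 = j + 1), if_neg hc0,
              if_pos (⟨by omega, by omega⟩ : c ≤ j + 1 ∧ r₀ + 1 ≤ j + 1)]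
            have e1 : r₀ + 1 - 1 = r₀ := by omega
            rw [e1]
            exact hd
          · have hcell := L.dots_cells _ _ (by rw [hd]; simp)
            refine Or.inr ⟨c₀ + 1, by omega, ?_⟩
            rw [if_neg (by omega : ¬ r = j + 1), if_neg (by omega : ¬ c₀ + 1 = 0),
              if_pos (⟨by omega, by omega⟩ : c₀ + 1 ≤ j + 1 ∧ r ≤ j + 1)]
            have e1 : c₀ + 1 - 1 = c₀ := by omega
            rw [e1]
            exact hd
        · -- r ≥ j + 1 : look for a red in column c of L
          by_cases hred : ∀ r₀, L.dots (c - 1) r₀ ≠ some true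
          · refine Or.inl ⟨j + 1, by omega, ?_⟩
            rw [if_pos rfl, if_neg hc0, if_pos (⟨hcj', hc, hred⟩ :
              c ≤ j ∧ L.shape (c - 1) = false ∧ (∀ r₀, L.dots (c - 1) r₀ ≠ some true))]
          · push_neg at hred
            obtain ⟨r₀, hd⟩ := hred
            have hcell := L.dots_cells _ _ (by rw [hd]; simp)
            refine Or.inl ⟨r₀ + 1, by omega, ?_⟩
            rw [if_neg (by omega : ¬ r₀ + 1 = j + 1), if_neg hc0,
              if_pos (⟨by omega, by omega⟩ : c ≤ j + 1 ∧ r₀ + 1 ≤ j + 1)]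
            have e1 : r₀ + 1 - 1 = r₀ := by omega
            rw [e1]
            exact hd
      · -- c in the right block
        rw [if_neg hc0, if_neg hcj] at hc
        have hr2 : ¬ r ≤ j + 1 := by omega
        rw [if_neg (by omega : ¬ r = 0), if_neg hr2] at hr
        rcases R.cover (c - (j + 2)) (r - (j + 2)) hc hr (by omega) (by omega) with
          ⟨r₀, hr₀, hd⟩ | ⟨c₀, hc₀, hd⟩
        · refine Or.inl ⟨r₀ + (j + 2), by omega, ?_⟩
          rw [if_neg (by omega : ¬ r₀ + (j + 2) = j + 1), if_neg hc0,
            if_neg (by omega : ¬ (c ≤ j + 1 ∧ r₀ + (j + 2) ≤ j + 1)),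
            if_pos (⟨by omega, by omega⟩ : j + 2 ≤ c ∧ j + 2 ≤ r₀ + (j + 2))]
          have e1 : r₀ + (j + 2) - (j + 2) = r₀ := by omega
          rw [e1]
          exact hd
        · refine Or.inr ⟨c₀ + (j + 2), by omega, ?_⟩
          rw [if_neg (by omega : ¬ r = j + 1), if_neg (by omega : ¬ c₀ + (j + 2) = 0),
            if_neg (by omega : ¬ (c₀ + (j + 2) ≤ j + 1 ∧ r ≤ j + 1)),
            if_pos (⟨by omega, by omega⟩ : j + 2 ≤ c₀ + (j + 2) ∧ j + 2 ≤ r)]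
          have e1 : c₀ + (j + 2) - (j + 2) = c₀ := by omega
          rw [e1]
          exact hd
/-- Restriction of a tableau to the columns/rows strictly between step 0 and step `j+1`. -/
def leftPart {j k : ℕ} (t : NatTab (j + k + 2)) : NatTab j where
  shape s := if s < j then t.shape (s + 1) else true
  dots c r := if r + 1 ≤ j then t.dots (c + 1) (r + 1) else none
  shape_top s hs := by
    beta_reduce
    rw [if_neg (by omega : ¬ s < j)]
  dots_cells := by
    intro c r hd
    beta_reduce at hd ⊢
    by_cases hg : r + 1 ≤ j
    · rw [if_pos hg] at hd
      obtain ⟨e1, e2, e3, e4⟩ := t.dots_cells _ _ hd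
      refine ⟨?_, ?_, by omega, by omega⟩
      · rw [if_pos (by omega : c < j)]; exact e1
      · rw [if_pos (by omega : r < j)]; exact e2
    · rw [if_neg hg] at hd; simp at hd
  red := by
    intro c r r' hd hlt
    beta_reduce at hd ⊢
    by_cases hg : r + 1 ≤ j
    · rw [if_pos hg] at hd
      by_cases hg' : r' + 1 ≤ j
      · rw [if_pos hg']
        exact t.red _ _ _ hd (by omega)
      · rw [if_neg hg']
    · rw [if_neg hg] at hd; simp at hd
  blue := by
    intro c r c' hd hlt
    beta_reduce at hd ⊢
    by_cases hg : r + 1 ≤ j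
    · rw [if_pos hg] at hd
      rw [if_pos hg]
      exact t.blue _ _ _ hd (by omega)
    · rw [if_neg hg] at hd; simp at hd
  cover := by
    intro c r hc hr hlt hrn
    beta_reduce at hc hr ⊢
    rw [if_pos (by omega : c < j)] at hc
    rw [if_pos (by omega : r < j)] at hr
    rcases t.cover (c + 1) (r + 1) hc hr (by omega) (by omega) with
      ⟨r₀, hr₀, hd⟩ | ⟨c₀, hc₀, hd⟩
    · have hcell := t.dots_cells _ _ (by rw [hd]; simp)
      refine Or.inl ⟨r₀ - 1, by omega, ?_⟩
      rw [if_pos (by omega : r₀ - 1 + 1 ≤ j)]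
      have e1 : r₀ - 1 + 1 = r₀ := by omega
      rw [e1]; exact hd
    · have hcell := t.dots_cells _ _ (by rw [hd]; simp)
      refine Or.inr ⟨c₀ - 1, by omega, ?_⟩
      rw [if_pos (by omega : r + 1 ≤ j)]
      have e1 : c₀ - 1 + 1 = c₀ := by omega
      rw [e1]; exact hd

/-- Restriction of a tableau to the columns/rows after step `j+1`. -/
def rightPart {j k : ℕ} (t : NatTab (j + k + 2)) : NatTab k where
  shape s := t.shape (s + (j + 2))
  dots c r := t.dots (c + (j + 2)) (r + (j + 2))
  shape_top s hs := t.shape_top _ (by omega)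
  dots_cells c r hd := by
    obtain ⟨e1, e2, e3, e4⟩ := t.dots_cells _ _ hd
    exact ⟨e1, e2, by omega, by omega⟩
  red c r r' hd hlt := t.red _ _ _ hd (by omega)
  blue c r c' hd hlt := t.blue _ _ _ hd (by omega)
  cover c r hc hr hlt hrn := by
    rcases t.cover (c + (j + 2)) (r + (j + 2)) hc hr (by omega) (by omega) with
      ⟨r₀, hr₀, hd⟩ | ⟨c₀, hc₀, hd⟩
    · have hcell := t.dots_cells _ _ (by rw [hd]; simp)
      refine Or.inl ⟨r₀ - (j + 2), by omega, ?_⟩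
      show t.dots (c + (j + 2)) (r₀ - (j + 2) + (j + 2)) = some true
      have e1 : r₀ - (j + 2) + (j + 2) = r₀ := by omega
      rw [e1]; exact hd
    · have hcell := t.dots_cells _ _ (by rw [hd]; simp)
      refine Or.inr ⟨c₀ - (j + 2), by omega, ?_⟩
      show t.dots (c₀ - (j + 2) + (j + 2)) (r + (j + 2)) = some false
      have e1 : c₀ - (j + 2) + (j + 2) = c₀ := by omega
      rw [e1]; exact hd
theorem leftPart_shape_lt {j k : ℕ} (t : NatTab (j + k + 2)) {s : ℕ} (h : s < j) :
    (leftPart t).shape s = t.shape (s + 1) := by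
  show (if s < j then t.shape (s + 1) else true) = t.shape (s + 1)
  rw [if_pos h]

theorem leftPart_shape_ge {j k : ℕ} (t : NatTab (j + k + 2)) {s : ℕ} (h : j ≤ s) :
    (leftPart t).shape s = true := by
  show (if s < j then t.shape (s + 1) else true) = true
  rw [if_neg (by omega : ¬ s < j)]

theorem leftPart_dots_le {j k : ℕ} (t : NatTab (j + k + 2)) {c r : ℕ} (h : r + 1 ≤ j) :
    (leftPart t).dots c r = t.dots (c + 1) (r + 1) := by
  show (if r + 1 ≤ j then t.dots (c + 1) (r + 1) else none) = t.dots (c + 1) (r + 1)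
  rw [if_pos h]

theorem leftPart_dots_gt {j k : ℕ} (t : NatTab (j + k + 2)) {c r : ℕ} (h : ¬ r + 1 ≤ j) :
    (leftPart t).dots c r = none := by
  show (if r + 1 ≤ j then t.dots (c + 1) (r + 1) else none) = none
  rw [if_neg h]

theorem red_unique {n : ℕ} (t : NatTab n) {c r r' : ℕ} (h : t.dots c r = some true)
    (h' : t.dots c r' = some true) : r = r' := by
  rcases lt_trichotomy r r' with h1 | h1 | h1
  · rw [t.red c r r' h h1] at h'; cases h'
  · exact h1
  · rw [t.red c r' r h' h1] at h; cases h

section Facts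
variable {j k : ℕ} (t : NatTab (j + k + 2)) (hred : t.dots 0 (j + 1) = some true)

include hred

theorem fact_shape0 : t.shape 0 = false := (t.dots_cells _ _ (by rw [hred]; simp)).1

theorem fact_shape_r1 : t.shape (j + 1) = true := (t.dots_cells _ _ (by rw [hred]; simp)).2.1

theorem fact_noblue_row : ∀ c, t.dots c (j + 1) ≠ some false := by
  intro c hb
  by_cases hc : c = 0
  · subst hc; rw [hred] at hb; cases hb
  · have := t.blue c (j + 1) 0 hb (by omega)
    rw [this] at hred; cases hred

theorem fact_col_red : ∀ c, 1 ≤ c → c ≤ j → t.shape c = false →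
    ∃ r₀, r₀ ≤ j + 1 ∧ t.dots c r₀ = some true := by
  intro c h1 h2 hsh
  rcases t.cover c (j + 1) hsh (fact_shape_r1 t hred) (by omega) (by omega) with
    ⟨r₀, hh1, hh2⟩ | ⟨c₀, hh1, hh2⟩
  · exact ⟨r₀, hh1, hh2⟩
  · exact absurd hh2 (fact_noblue_row t hred c₀)

theorem fact_cross_none : ∀ c r, 1 ≤ c → c ≤ j → j + 1 < r → t.dots c r = none := by
  intro c r h1 h2 h3
  by_contra hd
  have hcell := t.dots_cells _ _ hd
  obtain ⟨r₀, hh1, hh2⟩ := fact_col_red t hred c h1 h2 hcell.1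
  rw [t.red c r₀ r hh2 (by omega)] at hd
  exact hd rfl

end Facts

open Classical in
/-- Case C: first step horizontal, red dot in column 0 at row `j+1`. -/
noncomputable def equivC (j k : ℕ) :
    {t : NatTab (j + k + 2) // t.dots 0 (j + 1) = some true} ≃ NatTab j × NatTab k where
  toFun t := (leftPart t.1, rightPart t.1)
  invFun p := ⟨glue p.1 p.2, by
    show (glue p.1 p.2).dots 0 (j + 1) = some true
    simp only [glue]
    beta_reduce
    first
      | rw [if_pos rfl, if_pos rfl]
      | rw [if_pos trivial, if_pos trivial]⟩
  left_inv := by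
    rintro ⟨t, hred⟩
    apply Subtype.ext
    apply NatTab.ext'
    · funext s
      show (glue (leftPart t) (rightPart t)).shape s = t.shape s
      simp only [glue]
      beta_reduce
      by_cases hs0 : s = 0
      · subst hs0
        rw [if_pos rfl, fact_shape0 t hred]
      · rw [if_neg hs0]
        by_cases hsj : s ≤ j + 1
        · rw [if_pos hsj]
          by_cases hsj' : s ≤ j
          · rw [leftPart_shape_lt t (by omega : s - 1 < j)]
            congr 1
            omega
          · have hs1 : s = j + 1 := by omega
            subst hs1
            rw [leftPart_shape_ge t (by omega : j ≤ j + 1 - 1)]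
            exact (fact_shape_r1 t hred).symm
        · rw [if_neg hsj]
          show t.shape (s - (j + 2) + (j + 2)) = t.shape s
          congr 1
          omega
    · funext c r
      show (glue (leftPart t) (rightPart t)).dots c r = t.dots c r
      simp only [glue]
      beta_reduce
      by_cases hr1 : r = j + 1
      · subst hr1
        rw [if_pos rfl]
        by_cases hc0 : c = 0
        · subst hc0
          rw [if_pos rfl]
          exact hred.symm
        · rw [if_neg hc0]
          by_cases hcond : c ≤ j ∧ (leftPart t).shape (c - 1) = false ∧
              (∀ r₀, (leftPart t).dots (c - 1) r₀ ≠ some true)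
          · rw [if_pos hcond]
            obtain ⟨hc1, hc2, hc3⟩ := hcond
            have hsc : t.shape c = false := by
              rw [leftPart_shape_lt t (by omega : c - 1 < j)] at hc2
              rw [(by omega : c - 1 + 1 = c)] at hc2
              exact hc2
            obtain ⟨r₀, hh1, hh2⟩ := fact_col_red t hred c (by omega) hc1 hsc
            by_cases hr₀ : r₀ ≤ j
            · exfalso
              have hr₀1 : 1 ≤ r₀ := by
                have := (t.dots_cells _ _ (by rw [hh2]; simp)).2.2.1
                omega
              apply hc3 (r₀ - 1)
              rw [leftPart_dots_le t (by omega : r₀ - 1 + 1 ≤ j)]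
              rw [(by omega : c - 1 + 1 = c), (by omega : r₀ - 1 + 1 = r₀)]
              exact hh2
            · have : r₀ = j + 1 := by omega
              subst this
              exact hh2.symm
          · rw [if_neg hcond]
            by_cases hcj : c ≤ j
            · by_cases hsc : t.shape c = false
              · by_cases hnored : ∀ r₀, r₀ ≤ j → t.dots c r₀ ≠ some true
                · exfalso
                  apply hcond
                  refine ⟨hcj, ?_, ?_⟩
                  · rw [leftPart_shape_lt t (by omega : c - 1 < j),
                      (by omega : c - 1 + 1 = c)]
                    exact hsc
                  · intro r₀ hLd
                    by_cases hg : r₀ + 1 ≤ j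
                    · rw [leftPart_dots_le t hg, (by omega : c - 1 + 1 = c)] at hLd
                      exact hnored (r₀ + 1) (by omega) hLd
                    · rw [leftPart_dots_gt t hg] at hLd
                      cases hLd
                · push_neg at hnored
                  obtain ⟨r₀, hh1, hh2⟩ := hnored
                  exact (t.red c r₀ (j + 1) hh2 (by omega)).symm
              · symm
                by_contra hd
                exact hsc (t.dots_cells _ _ hd).1
            · symm
              by_contra hd
              have := (t.dots_cells _ _ hd).2.2.1
              omega
      · rw [if_neg hr1]
        by_cases hc0 : c = 0
        · subst hc0
          rw [if_pos rfl]
          by_cases hcond : 1 ≤ r ∧ r ≤ j ∧ (leftPart t).shape (r - 1) = true ∧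
              (∀ c₀, (leftPart t).dots c₀ (r - 1) ≠ some false)
          · rw [if_pos hcond]
            obtain ⟨hr1', hrj, hsh, hnb⟩ := hcond
            have hsr : t.shape r = true := by
              rw [leftPart_shape_lt t (by omega : r - 1 < j),
                (by omega : r - 1 + 1 = r)] at hsh
              exact hsh
            rcases t.cover 0 r (fact_shape0 t hred) hsr (by omega) (by omega) with
              ⟨r₀, hh1, hh2⟩ | ⟨c₀, hh1, hh2⟩
            · exfalso
              have := red_unique t hh2 hred
              omega
            · by_cases hc₀0 : c₀ = 0
              · subst hc₀0; exact hh2.symm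
              · exfalso
                apply hnb (c₀ - 1)
                rw [leftPart_dots_le t (by omega : r - 1 + 1 ≤ j),
                  (by omega : c₀ - 1 + 1 = c₀), (by omega : r - 1 + 1 = r)]
                exact hh2
          · rw [if_neg hcond]
            symm
            by_cases hr0 : r = 0
            · subst hr0
              by_contra hd
              have := (t.dots_cells _ _ hd).2.2.1
              omega
            · by_cases hrj : r ≤ j
              · -- 1 ≤ r ≤ j and the blue condition fails
                by_contra hd
                rcases Option.ne_none_iff_exists'.1 hd with ⟨b, hb⟩
                cases b
                · -- blue dot: condition must hold
                  apply hcond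
                  have hcell := t.dots_cells _ _ (by rw [hb]; simp)
                  refine ⟨by omega, hrj, ?_, ?_⟩
                  · rw [leftPart_shape_lt t (by omega : r - 1 < j),
                      (by omega : r - 1 + 1 = r)]
                    exact hcell.2.1
                  · intro c₀ hLd
                    by_cases hg : r - 1 + 1 ≤ j
                    · rw [leftPart_dots_le t hg, (by omega : r - 1 + 1 = r)] at hLd
                      have := t.blue (c₀ + 1) r 0 hLd (by omega)
                      rw [this] at hb
                      cases hb
                    · rw [leftPart_dots_gt t hg] at hLd
                      cases hLd
                · -- red dot: contradicts uniqueness of the red of column 0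
                  have := red_unique t hb hred
                  omega
              · -- r ≥ j + 2
                exact t.red 0 (j + 1) r hred (by omega)
        · rw [if_neg hc0]
          by_cases h3 : c ≤ j + 1 ∧ r ≤ j + 1
          · rw [if_pos h3]
            by_cases hr0 : r = 0
            · subst hr0
              have h1 : (leftPart t).dots (c - 1) (0 - 1) = none := by
                by_contra hd
                have := ((leftPart t).dots_cells _ _ hd).2.2.1
                omega
              have h2 : t.dots c 0 = none := by
                by_contra hd
                have := (t.dots_cells _ _ hd).2.2.1
                omega
              rw [h1, h2]
            · rw [leftPart_dots_le t (by omega : r - 1 + 1 ≤ j),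
                (by omega : c - 1 + 1 = c), (by omega : r - 1 + 1 = r)]
          · rw [if_neg h3]
            by_cases h4 : j + 2 ≤ c ∧ j + 2 ≤ r
            · rw [if_pos h4]
              show t.dots (c - (j + 2) + (j + 2)) (r - (j + 2) + (j + 2)) = t.dots c r
              rw [(by omega : c - (j + 2) + (j + 2) = c), (by omega : r - (j + 2) + (j + 2) = r)]
            · rw [if_neg h4]
              symm
              by_cases hcj : c ≤ j + 1
              · -- then r ≥ j + 2
                by_cases hcj' : c ≤ j
                · exact fact_cross_none t hred c r (by omega) hcj' (by omega)
                · -- c = j + 1, a row, not a column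
                  by_contra hd
                  have := (t.dots_cells _ _ hd).1
                  rw [(by omega : c = j + 1), fact_shape_r1 t hred] at this
                  cases this
              · -- c ≥ j + 2 and r ≤ j + 1 : not a cell
                by_contra hd
                have := (t.dots_cells _ _ hd).2.2.1
                omega
  right_inv := by
    rintro ⟨L, R⟩
    dsimp only
    refine Prod.ext ?_ ?_
    · apply NatTab.ext'
      · funext s
        show (leftPart (glue L R)).shape s = L.shape s
        by_cases hs : s < j
        · rw [leftPart_shape_lt _ hs]
          show (if s + 1 = 0 then false
            else if s + 1 ≤ j + 1 then L.shape (s + 1 - 1) else R.shape (s + 1 - (j + 2)))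
              = L.shape s
          rw [if_neg (by omega : ¬ s + 1 = 0), if_pos (by omega : s + 1 ≤ j + 1),
            (by omega : s + 1 - 1 = s)]
        · rw [leftPart_shape_ge _ (by omega : j ≤ s), L.shape_top s (by omega)]
      · funext c r
        show (leftPart (glue L R)).dots c r = L.dots c r
        by_cases hg : r + 1 ≤ j
        · rw [leftPart_dots_le _ hg]
          show (glue L R).dots (c + 1) (r + 1) = L.dots c r
          simp only [glue]
          beta_reduce
          rw [if_neg (by omega : ¬ r + 1 = j + 1), if_neg (by omega : ¬ c + 1 = 0)]
          by_cases hcj : c + 1 ≤ j + 1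
          · rw [if_pos (⟨hcj, by omega⟩ : c + 1 ≤ j + 1 ∧ r + 1 ≤ j + 1),
              (by omega : c + 1 - 1 = c), (by omega : r + 1 - 1 = r)]
          · rw [if_neg (by omega : ¬ (c + 1 ≤ j + 1 ∧ r + 1 ≤ j + 1)),
              if_neg (by omega : ¬ (j + 2 ≤ c + 1 ∧ j + 2 ≤ r + 1))]
            symm
            by_contra hd
            have h1 := (L.dots_cells _ _ hd).2.2.1
            have h2 := (L.dots_cells _ _ hd).2.2.2
            omega
        · rw [leftPart_dots_gt _ hg]
          symm
          by_contra hd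
          have := (L.dots_cells _ _ hd).2.2.2
          omega
    · apply NatTab.ext'
      · funext s
        show (glue L R).shape (s + (j + 2)) = R.shape s
        simp only [glue]
        beta_reduce
        rw [if_neg (by omega : ¬ s + (j + 2) = 0), if_neg (by omega : ¬ s + (j + 2) ≤ j + 1),
          (by omega : s + (j + 2) - (j + 2) = s)]
      · funext c r
        show (glue L R).dots (c + (j + 2)) (r + (j + 2)) = R.dots c r
        simp only [glue]
        beta_reduce
        rw [if_neg (by omega : ¬ r + (j + 2) = j + 1),
          if_neg (by omega : ¬ c + (j + 2) = 0),
          if_neg (by omega : ¬ (c + (j + 2) ≤ j + 1 ∧ r + (j + 2) ≤ j + 1)),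
          if_pos (⟨by omega, by omega⟩ : j + 2 ≤ c + (j + 2) ∧ j + 2 ≤ r + (j + 2)),
          (by omega : c + (j + 2) - (j + 2) = c), (by omega : r + (j + 2) - (j + 2) = r)]
open Classical in
/-- Classifier: 0 if the first step is vertical; `r₁` if there is a red dot in column 0
(necessarily in row `r₁ ∈ [1, m]`); `m+1` if the first step is horizontal with no red
dot in column 0. -/
noncomputable def cls (m : ℕ) (t : NatTab (m + 1)) : Fin (m + 2) :=
  if t.shape 0 = true then ⟨0, by omega⟩
  else if h : ∃ r, t.dots 0 r = some true then
    ⟨h.choose, by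
      have := (t.dots_cells _ _ (by rw [h.choose_spec]; simp)).2.2.2
      omega⟩
  else ⟨m + 1, by omega⟩

theorem cls_val_zero (m : ℕ) (t : NatTab (m + 1)) :
    (cls m t).val = 0 ↔ t.shape 0 = true := by
  unfold cls
  by_cases h : t.shape 0 = true
  · simp [h]
  · rw [if_neg h]
    by_cases h2 : ∃ r, t.dots 0 r = some true
    · rw [dif_pos h2]
      simp only
      constructor
      · intro hv
        exfalso
        have hc := h2.choose_spec
        have := (t.dots_cells _ _ (by rw [hc]; simp)).2.2.1
        omega
      · intro hh; exact absurd hh h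
    · rw [dif_neg h2]
      simp only
      constructor
      · intro hv; omega
      · intro hh; exact absurd hh h

theorem cls_val_mid (m : ℕ) (t : NatTab (m + 1)) (v : ℕ) (h1 : 1 ≤ v) (h2 : v ≤ m) :
    (cls m t).val = v ↔ t.dots 0 v = some true := by
  unfold cls
  by_cases h : t.shape 0 = true
  · rw [if_pos h]
    simp only
    constructor
    · intro hv; omega
    · intro hd
      have := (t.dots_cells _ _ (by rw [hd]; simp)).1
      rw [h] at this; cases this
  · rw [if_neg h]
    by_cases h2' : ∃ r, t.dots 0 r = some true
    · rw [dif_pos h2']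
      simp only
      constructor
      · intro hv; rw [← hv]; exact h2'.choose_spec
      · intro hd; exact red_unique t h2'.choose_spec hd
    · rw [dif_neg h2']
      simp only
      constructor
      · intro hv; omega
      · intro hd; exact absurd ⟨v, hd⟩ h2'

theorem cls_val_last (m : ℕ) (t : NatTab (m + 1)) :
    (cls m t).val = m + 1 ↔ (t.shape 0 = false ∧ ∀ r, t.dots 0 r ≠ some true) := by
  unfold cls
  by_cases h : t.shape 0 = true
  · rw [if_pos h]
    simp only
    constructor
    · intro hv; omega
    · intro hh; rw [h] at hh; cases hh.1
  · rw [if_neg h]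
    by_cases h2 : ∃ r, t.dots 0 r = some true
    · rw [dif_pos h2]
      simp only
      constructor
      · intro hv
        have hc := h2.choose_spec
        have := (t.dots_cells _ _ (by rw [hc]; simp)).2.2.2
        omega
      · intro hh
        exfalso
        obtain ⟨r, hr⟩ := h2
        exact hh.2 r hr
    · rw [dif_neg h2]
      simp only
      constructor
      · intro _
        exact ⟨by simpa using h, fun r hr => h2 ⟨r, hr⟩⟩
      · intro _
        trivial

theorem natTab_card : ∀ m : ℕ, Nat.card (NatTab m) = catalan (m + 1) := by
  intro m
  induction m using Nat.strong_induction_on with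
  | _ m IH =>
    rcases m with _ | m
    · rw [natTab_zero_card, catalan_one]
    · classical
      letI : Fintype (NatTab (m + 1)) := Fintype.ofFinite _
      letI : ∀ y : Fin (m + 2), Fintype {t : NatTab (m + 1) // cls m t = y} :=
        fun y => Fintype.ofFinite _
      have key : Nat.card (NatTab (m + 1)) =
          ∑ y : Fin (m + 2), Nat.card {t : NatTab (m + 1) // cls m t = y} := by
        rw [Nat.card_eq_fintype_card, ← Fintype.card_congr (Equiv.sigmaFiberEquiv (cls m)),
          Fintype.card_sigma]
        simp [Nat.card_eq_fintype_card]
      have hterm : ∀ y : Fin (m + 2), Nat.card {t : NatTab (m + 1) // cls m t = y} =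
          catalan y.val * catalan (m + 1 - y.val) := by
        intro y
        have hy := y.isLt
        rcases Nat.eq_zero_or_pos y.val with hv0 | hv1
        · have e1 : {t : NatTab (m + 1) // cls m t = y} ≃
              {t : NatTab (m + 1) // t.shape 0 = true} :=
            Equiv.subtypeEquivRight (fun t => by
              rw [Fin.ext_iff, hv0]
              exact cls_val_zero m t)
          rw [Nat.card_congr e1, Nat.card_congr (equivA m), IH m (by omega), hv0]
          simp [catalan_zero]
        · rcases Nat.lt_or_ge y.val (m + 1) with hvm | hvm
          · obtain ⟨j, hj⟩ : ∃ j, y.val = j + 1 := ⟨y.val - 1, by omega⟩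
            obtain ⟨kk, hk⟩ : ∃ kk, m + 1 = j + kk + 2 := ⟨m - j - 1, by omega⟩
            have e1 : {t : NatTab (m + 1) // cls m t = y} ≃
                {t : NatTab (m + 1) // t.dots 0 y.val = some true} :=
              Equiv.subtypeEquivRight (fun t => by
                rw [Fin.ext_iff]
                exact cls_val_mid m t y.val (by omega) (by omega))
            rw [Nat.card_congr e1]
            have e2 : Nat.card {t : NatTab (m + 1) // t.dots 0 y.val = some true} =
                catalan (j + 1) * catalan (kk + 1) := by
              rw [hj, hk]
              rw [Nat.card_congr (equivC j kk), Nat.card_prod, IH j (by omega),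
                IH kk (by omega)]
            rw [e2, hj]
            have e3 : m + 1 - (j + 1) = kk + 1 := by omega
            rw [e3]
          · have hve : y.val = m + 1 := by omega
            have e1 : {t : NatTab (m + 1) // cls m t = y} ≃
                {t : NatTab (m + 1) // t.shape 0 = false ∧ ∀ r, t.dots 0 r ≠ some true} :=
              Equiv.subtypeEquivRight (fun t => by
                rw [Fin.ext_iff, hve]
                exact cls_val_last m t)
            rw [Nat.card_congr e1, Nat.card_congr (equivB m), IH m (by omega), hve]
            simp [Nat.sub_self, catalan_zero]
      rw [key, catalan_succ (m + 1)]
      exact Finset.sum_congr rfl fun y _ => hterm y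

theorem tree_card (n : ℕ) : Nat.card {t : Tree Unit // t.numNodes = n} = catalan n := by
  have e : {t : Tree Unit // t.numNodes = n} ≃ {t : Tree Unit // t ∈ Tree.treesOfNumNodesEq n} :=
    Equiv.subtypeEquivRight (fun t => BinaryTree.mem_treesOfNumNodesEq.symm)
  rw [Nat.card_congr e, Nat.card_eq_finsetCard, BinaryTree.treesOfNumNodesEq_card_eq_catalan]


/-- There is a bijection between Catalan alternative tableaux of size `n - 1` and
planar binary trees with `n` internal vertices. -/
theorem catAltTableau_equiv_trees (n : ℕ) (hn : 1 ≤ n) :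
    Nonempty (CatAltTableau (n - 1) ≃ {t : Tree Unit // t.numNodes = n}) := by
  have h1 : Nat.card (CatAltTableau (n - 1)) = catalan n := by
    rw [Nat.card_congr (catEquivNat (n - 1)), natTab_card (n - 1),
      (by omega : n - 1 + 1 = n)]
  have h2 := tree_card n
  have hfin : Finite {t : Tree Unit // t.numNodes = n} :=
    Finite.of_equiv _ (Equiv.subtypeEquivRight
      (fun t : Tree Unit => (BinaryTree.mem_treesOfNumNodesEq (n := n))))
  letI := Fintype.ofFinite (CatAltTableau (n - 1))
  letI := Fintype.ofFinite {t : Tree Unit // t.numNodes = n}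
  rw [Nat.card_eq_fintype_card] at h1 h2
  exact Fintype.card_eq.mp (h1.trans h2.symm)
end
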